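/- Let A be a real n×n matrix and Q a symmetric positive definite n×n matrix with AᵀQA - Q negative definite. Then for every initial state s₀ ∈ ℝⁿ, the sequence sₖ = A^k s₀ satisfies sₖᵀQsₖ → 0 as k → ∞, and hence sₖ → 0. -/

import Mathlib

open Matrix Filter

private lemma quad_cont {n : ℕ} (M : Matrix (Fin n) (Fin n) ℝ) :
    Continuous (fun x : Fin n → ℝ => x ⬝ᵥ M.mulVec x) := by
  simp only [dotProduct, mulVec]
  fun_prop

private lemma quad_smul {n : ℕ} (M : Matrix (Fin n) (Fin n) ℝ) (a : ℝ) (x : Fin n → ℝ) :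
    (a • x) ⬝ᵥ M.mulVec (a • x) = a ^ 2 * (x ⬝ᵥ M.mulVec x) := by
  rw [Matrix.mulVec_smul, smul_dotProduct, dotProduct_smul, smul_eq_mul, smul_eq_mul]
  ring

private lemma quad_conj {n : ℕ} (A Q : Matrix (Fin n) (Fin n) ℝ) (x : Fin n → ℝ) :
    (A.mulVec x) ⬝ᵥ Q.mulVec (A.mulVec x) = x ⬝ᵥ (Aᵀ * Q * A).mulVec x := by
  rw [Matrix.mulVec_mulVec, Matrix.dotProduct_mulVec, Matrix.dotProduct_mulVec,
    ← Matrix.vecMul_transpose, Matrix.vecMul_vecMul, Matrix.mul_assoc]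

private lemma quad_lower_bound {n : ℕ} {P : Matrix (Fin n) (Fin n) ℝ} (hP : P.PosDef) :
    ∃ c > 0, ∀ x : Fin n → ℝ, c * ‖x‖ ^ 2 ≤ x ⬝ᵥ P.mulVec x := by
  rcases Nat.eq_zero_or_pos n with hn | hn
  · refine ⟨1, one_pos, fun x => ?_⟩
    subst hn
    have hx : x = 0 := funext fun i => absurd i.2 (by omega)
    have hxn : ‖x‖ = 0 := by rw [hx]; simp
    rw [hxn]; simp [dotProduct]
  · haveI : Nonempty (Fin n) := ⟨⟨0, hn⟩⟩
    have hcpt : IsCompact (Metric.sphere (0 : Fin n → ℝ) 1) := isCompact_sphere _ _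
    have hne : (Metric.sphere (0 : Fin n → ℝ) 1).Nonempty :=
      NormedSpace.sphere_nonempty.mpr zero_le_one
    obtain ⟨u, hu, hmin⟩ := hcpt.exists_isMinOn hne ((quad_cont P).continuousOn)
    have hu1 : ‖u‖ = 1 := by simpa using hu
    have hu0 : u ≠ 0 := by intro h; rw [h] at hu1; simp at hu1
    set c := u ⬝ᵥ P.mulVec u with hc
    have hcpos : 0 < c := by simpa using hP.dotProduct_mulVec_pos hu0
    refine ⟨c, hcpos, fun x => ?_⟩
    rcases eq_or_ne x 0 with rfl | hx0
    · simp
    · have hxn : ‖x‖ ≠ 0 := norm_ne_zero_iff.mpr hx0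
      set v := ‖x‖⁻¹ • x with hv
      have hvmem : v ∈ Metric.sphere (0 : Fin n → ℝ) 1 := by
        simp [hv, norm_smul, abs_of_nonneg (inv_nonneg.mpr (norm_nonneg x)),
          inv_mul_cancel₀ hxn]
      have hle : c ≤ v ⬝ᵥ P.mulVec v := hmin hvmem
      have hxv : x = ‖x‖ • v := by
        rw [hv, smul_smul, mul_inv_cancel₀ hxn, one_smul]
      have hq : x ⬝ᵥ P.mulVec x = ‖x‖ ^ 2 * (v ⬝ᵥ P.mulVec v) := by
        conv_lhs => rw [hxv]
        rw [quad_smul]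
      rw [hq]
      nlinarith [sq_nonneg ‖x‖]

theorem discrete_lyapunov_convergence {n : ℕ} (A Q : Matrix (Fin n) (Fin n) ℝ)
    (hQ : Q.PosDef) (h_dec : (Q - Aᵀ * Q * A).PosDef) :
    ∀ s0 : Fin n → ℝ,
      Tendsto (fun k : ℕ => ((A ^ k).mulVec s0) ⬝ᵥ Q.mulVec ((A ^ k).mulVec s0))
        atTop (nhds 0) ∧
      Tendsto (fun k : ℕ => (A ^ k).mulVec s0) atTop (nhds 0) := by
  intro s0
  set s : ℕ → Fin n → ℝ := fun k => (A ^ k).mulVec s0 with hs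
  set V : ℕ → ℝ := fun k => s k ⬝ᵥ Q.mulVec (s k) with hV
  have hsucc : ∀ k, s (k + 1) = A.mulVec (s k) := by
    intro k
    simp only [hs, pow_succ', Matrix.mulVec_mulVec]
  -- V is nonnegative
  have hVnn : ∀ k, 0 ≤ V k := fun k => by
    have := hQ.posSemidef.dotProduct_mulVec_nonneg (s k); simpa using this
  -- decrease identity
  have hdiff : ∀ k, V k - V (k + 1) = s k ⬝ᵥ (Q - Aᵀ * Q * A).mulVec (s k) := by
    intro k
    rw [Matrix.sub_mulVec, dotProduct_sub]
    have : V (k + 1) = s k ⬝ᵥ (Aᵀ * Q * A).mulVec (s k) := by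
      rw [hV]; simp only; rw [hsucc k, quad_conj]
    rw [this]
  have hanti : Antitone V := by
    apply antitone_nat_of_succ_le
    intro k
    have h1 : 0 ≤ s k ⬝ᵥ (Q - Aᵀ * Q * A).mulVec (s k) := by
      have := h_dec.posSemidef.dotProduct_mulVec_nonneg (s k); simpa using this
    linarith [hdiff k, h1]
  have hbdd : BddBelow (Set.range V) := ⟨0, by rintro _ ⟨k, rfl⟩; exact hVnn k⟩
  have hVlim : Tendsto V atTop (nhds (⨅ k, V k)) := tendsto_atTop_ciInf hanti hbdd
  have hVlim' : Tendsto (fun k => V (k + 1)) atTop (nhds (⨅ k, V k)) :=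
    hVlim.comp (tendsto_add_atTop_nat 1)
  have hdiff0 : Tendsto (fun k => V k - V (k + 1)) atTop (nhds 0) := by
    have := hVlim.sub hVlim'
    simpa using this
  -- lower bound from positive definiteness
  obtain ⟨c, hcpos, hclb⟩ := quad_lower_bound h_dec
  have hsq0 : Tendsto (fun k => ‖s k‖ ^ 2) atTop (nhds 0) := by
    have hub : ∀ k, c * ‖s k‖ ^ 2 ≤ V k - V (k + 1) := fun k => by
      rw [hdiff k]; exact hclb (s k)
    have h1 : Tendsto (fun k => c * ‖s k‖ ^ 2) atTop (nhds 0) :=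
      squeeze_zero (fun k => by positivity) hub hdiff0
    have h2 := h1.const_mul c⁻¹
    simp only [mul_zero] at h2
    convert h2 using 2 with k
    field_simp
  have hnorm0 : Tendsto (fun k => ‖s k‖) atTop (nhds 0) := by
    have h := (Real.continuous_sqrt.tendsto 0).comp hsq0
    simp only [Function.comp_def, Real.sqrt_zero] at h
    have heq : (fun k => Real.sqrt (‖s k‖ ^ 2)) = fun k => ‖s k‖ :=
      funext fun k => Real.sqrt_sq (norm_nonneg _)
    rwa [heq] at h
  have hs0 : Tendsto s atTop (nhds 0) := tendsto_zero_iff_norm_tendsto_zero.mpr hnorm0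
  constructor
  · have hcont := (quad_cont Q).tendsto 0
    have := hcont.comp hs0
    simpa [hV, Function.comp_def] using this
  · exact hs0
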